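/- Under consistency, conditional mean transportability over trial participation (E[Y^{a=2} | X, S=1] = E[Y^{a=2} | X, S=0]), positivity of selection into the external population, conditional mean exchangeability over treatment in the external population, and treatment positivity in the external population, the potential outcome mean E[Y^{a=2} | S=1] equals γ_{0,2} = E[ E[Y | X, S=0, A=2] | S=1 ], where the inner conditional outcome mean is taken in the external data and integrated over the covariate distribution of the index population. -/
import Mathlib


open scoped Classical BigOperators
open Finset

noncomputable section

/-- Indicator of a proposition. -/
def ind (P : Prop) : ℝ := if P then 1 else 0

/-- Expectation with respect to weights `p` on a finite outcome space. -/
def pexp {Ω : Type*} [Fintype Ω] (p : Ω → ℝ) (f : Ω → ℝ) : ℝ := ∑ ω, p ω * f ω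

/-- Probability of an event. -/
def prob {Ω : Type*} [Fintype Ω] (p : Ω → ℝ) (B : Ω → Prop) : ℝ :=
  pexp p (fun ω => ind (B ω))

/-- Conditional expectation of `f` given event `B`. -/
def cexp {Ω : Type*} [Fintype Ω] (p : Ω → ℝ) (f : Ω → ℝ) (B : Ω → Prop) : ℝ :=
  pexp p (fun ω => f ω * ind (B ω)) / prob p B

/-- Conditional probability of `B` given `C`. -/
def cprob {Ω : Type*} [Fintype Ω] (p : Ω → ℝ) (B C : Ω → Prop) : ℝ :=
  prob p (fun ω => B ω ∧ C ω) / prob p C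

/-- Conditional outcome mean `g_{s,a}(x) = E[Y | X = x, S = s, A = a]`. -/
def gfun {Ω 𝒳 : Type*} [Fintype Ω] (p : Ω → ℝ) (X : Ω → 𝒳) (S A : Ω → ℕ)
    (Y : Ω → ℝ) (s a : ℕ) (x : 𝒳) : ℝ :=
  cexp p Y (fun ω => X ω = x ∧ S ω = s ∧ A ω = a)

/-- Standardized functional `γ_{s,a} = E[ E[Y | X, S=s, A=a] | S=1 ]`. -/
def gam {Ω 𝒳 : Type*} [Fintype Ω] (p : Ω → ℝ) (X : Ω → 𝒳) (S A : Ω → ℕ)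
    (Y : Ω → ℝ) (s a : ℕ) : ℝ :=
  cexp p (fun ω => gfun p X S A Y s a (X ω)) (fun ω => S ω = 1)

/-- Participation probability `p_s(x) = Pr[S = s | X = x]`. -/
def psel {Ω 𝒳 : Type*} [Fintype Ω] (p : Ω → ℝ) (X : Ω → 𝒳) (S : Ω → ℕ)
    (s : ℕ) (x : 𝒳) : ℝ :=
  cprob p (fun ω => S ω = s) (fun ω => X ω = x)

/-- Treatment probability `e_{s,a}(x) = Pr[A = a | X = x, S = s]`. -/
def etrt {Ω 𝒳 : Type*} [Fintype Ω] (p : Ω → ℝ) (X : Ω → 𝒳) (S A : Ω → ℕ)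
    (s a : ℕ) (x : 𝒳) : ℝ :=
  cprob p (fun ω => A ω = a) (fun ω => X ω = x ∧ S ω = s)

/-- Weight `w_{s,a}(X,S,A) = I(S=s, A=a) p_1(X) / (e_{s,a}(X) p_s(X))`. -/
def wgt {Ω 𝒳 : Type*} [Fintype Ω] (p : Ω → ℝ) (X : Ω → 𝒳) (S A : Ω → ℕ)
    (s a : ℕ) (ω : Ω) : ℝ :=
  ind (S ω = s ∧ A ω = a) * psel p X S 1 (X ω) /
    (etrt p X S A s a (X ω) * psel p X S s (X ω))

/-- Influence function `Γ_{s,a}(O)`. -/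
def Gam {Ω 𝒳 : Type*} [Fintype Ω] (p : Ω → ℝ) (X : Ω → 𝒳) (S A : Ω → ℕ)
    (Y : Ω → ℝ) (s a : ℕ) (ω : Ω) : ℝ :=
  (1 / prob p (fun ω' => S ω' = 1)) *
    (ind (S ω = 1) * (gfun p X S A Y s a (X ω) - gam p X S A Y s a)
      + wgt p X S A s a ω * (Y ω - gfun p X S A Y s a (X ω)))

/-- Variance of `f` under `p`. -/
def pvar {Ω : Type*} [Fintype Ω] (p : Ω → ℝ) (f : Ω → ℝ) : ℝ :=
  pexp p (fun ω => (f ω - pexp p f) ^ 2)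


section Aux
variable {Ω : Type*} [Fintype Ω] (p : Ω → ℝ)

lemma prob_nonneg (hp0 : ∀ ω, 0 ≤ p ω) (B : Ω → Prop) : 0 ≤ prob p B := by
  refine Finset.sum_nonneg fun ω _ => ?_
  have : (0:ℝ) ≤ ind (B ω) := by unfold ind; split <;> norm_num
  exact mul_nonneg (hp0 ω) this

lemma prob_zero_p (hp0 : ∀ ω, 0 ≤ p ω) {B : Ω → Prop} (h : prob p B = 0) :
    ∀ ω, B ω → p ω = 0 := by
  intro ω hB
  have hterm : ∀ ω' ∈ Finset.univ, (0:ℝ) ≤ p ω' * ind (B ω') := by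
    intro ω' _
    have : (0:ℝ) ≤ ind (B ω') := by unfold ind; split <;> norm_num
    exact mul_nonneg (hp0 ω') this
  have := (Finset.sum_eq_zero_iff_of_nonneg hterm).mp h ω (Finset.mem_univ ω)
  simpa [ind, hB] using this

lemma cexp_congr {f g : Ω → ℝ} {B : Ω → Prop} (h : ∀ ω, B ω → f ω = g ω) :
    cexp p f B = cexp p g B := by
  unfold cexp pexp
  congr 1
  refine Finset.sum_congr rfl fun ω _ => ?_
  by_cases hB : B ω
  · simp only [h ω hB]
  · simp [ind, hB]

lemma ind_congr {B C : Prop} (h : B ↔ C) : ind B = ind C := by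
  unfold ind; simp [h]

lemma cexp_event_congr (f : Ω → ℝ) {B C : Ω → Prop} (h : ∀ ω, B ω ↔ C ω) :
    cexp p f B = cexp p f C := by
  unfold cexp pexp prob
  simp only [ind_congr (h _)]

end Aux

theorem statement1
    {Ω 𝒳 : Type*} [Fintype Ω] (p : Ω → ℝ)
    (hp0 : ∀ ω, 0 ≤ p ω) (hp1 : ∑ ω, p ω = 1)
    (X : Ω → 𝒳) (S A : Ω → ℕ) (Y : Ω → ℝ) (Ypo : ℕ → Ω → ℝ)
    (hS : 0 < prob p (fun ω => S ω = 1))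
    (hcons : ∀ ω a, A ω = a → Ypo a ω = Y ω)
    (hA4 : ∀ x, 0 < prob p (fun ω => X ω = x ∧ S ω = 1) →
      cexp p (Ypo 2) (fun ω => X ω = x ∧ S ω = 1) =
        cexp p (Ypo 2) (fun ω => X ω = x ∧ S ω = 0))
    (hA5 : ∀ x, 0 < prob p (fun ω => X ω = x ∧ S ω = 1) →
      0 < cprob p (fun ω => S ω = 0) (fun ω => X ω = x))
    (hA6 : ∀ x, 0 < prob p (fun ω => X ω = x ∧ S ω = 0) →
      cexp p (Ypo 2) (fun ω => X ω = x ∧ S ω = 0) =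
        cexp p (Ypo 2) (fun ω => X ω = x ∧ S ω = 0 ∧ A ω = 2))
    (hA7 : ∀ x, 0 < prob p (fun ω => X ω = x ∧ S ω = 0) →
      0 < cprob p (fun ω => A ω = 2) (fun ω => X ω = x ∧ S ω = 0)) :
    cexp p (Ypo 2) (fun ω => S ω = 1) = gam p X S A Y 0 2 := by
  classical
  -- reduce to equality of numerators
  have hnum : pexp p (fun ω => Ypo 2 ω * ind (S ω = 1)) =
      pexp p (fun ω => gfun p X S A Y 0 2 (X ω) * ind (S ω = 1)) := by
    unfold pexp
    have hfib : ∀ (f : Ω → ℝ), ∑ ω, f ω =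
        ∑ x ∈ Finset.univ.image X, ∑ ω ∈ Finset.univ.filter (fun ω => X ω = x), f ω := by
      intro f
      exact (Finset.sum_fiberwise_of_maps_to
        (fun ω _ => Finset.mem_image_of_mem X (Finset.mem_univ ω)) f).symm
    rw [hfib (fun ω => p ω * (Ypo 2 ω * ind (S ω = 1))),
        hfib (fun ω => p ω * (gfun p X S A Y 0 2 (X ω) * ind (S ω = 1)))]
    refine Finset.sum_congr rfl fun x _ => ?_
    -- rewrite fiber sums as full sums with joint indicators
    have hL : ∑ ω ∈ Finset.univ.filter (fun ω => X ω = x),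
        p ω * (Ypo 2 ω * ind (S ω = 1)) =
        ∑ ω, p ω * (Ypo 2 ω * ind (X ω = x ∧ S ω = 1)) := by
      rw [Finset.sum_filter]
      refine Finset.sum_congr rfl fun ω _ => ?_
      by_cases hx : X ω = x <;> by_cases hs : S ω = 1 <;> simp [ind, hx, hs]
    have hR : ∑ ω ∈ Finset.univ.filter (fun ω => X ω = x),
        p ω * (gfun p X S A Y 0 2 (X ω) * ind (S ω = 1)) =
        gfun p X S A Y 0 2 x * ∑ ω, p ω * ind (X ω = x ∧ S ω = 1) := by
      rw [Finset.mul_sum, Finset.sum_filter]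
      refine Finset.sum_congr rfl fun ω _ => ?_
      by_cases hx : X ω = x <;> by_cases hs : S ω = 1 <;> simp [ind, hx, hs] <;> ring
    rw [hL, hR]
    have hPx1 : prob p (fun ω => X ω = x ∧ S ω = 1) = ∑ ω, p ω * ind (X ω = x ∧ S ω = 1) := rfl
    by_cases hpos : 0 < prob p (fun ω => X ω = x ∧ S ω = 1)
    · -- positive case: use assumptions to identify gfun with cexp of Ypo 2
      -- Step 1: positivity in external population
      have h5 := hA5 x hpos
      have hPx0 : 0 < prob p (fun ω => X ω = x ∧ S ω = 0) := by
        unfold cprob at h5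
        have hden := prob_nonneg p hp0 (fun ω => X ω = x)
        have hnumnn := prob_nonneg p hp0 (fun ω => S ω = 0 ∧ X ω = x)
        by_contra hle
        have h0 : prob p (fun ω => X ω = x ∧ S ω = 0) = 0 :=
          le_antisymm (not_lt.mp hle) (prob_nonneg p hp0 _)
        have heq : prob p (fun ω => S ω = 0 ∧ X ω = x) =
            prob p (fun ω => X ω = x ∧ S ω = 0) := by
          unfold prob pexp
          simp only [ind_congr (and_comm)]
        rw [heq, h0, zero_div] at h5
        exact lt_irrefl 0 h5
      -- chain of cexp equalities
      have hchain : gfun p X S A Y 0 2 x = cexp p (Ypo 2) (fun ω => X ω = x ∧ S ω = 1) := by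
        rw [hA4 x hpos, hA6 x hPx0]
        unfold gfun
        refine (cexp_congr p ?_).symm
        intro ω hω
        exact hcons ω 2 hω.2.2
      rw [hchain]
      -- now both sides equal cexp * prob
      have : ∑ ω, p ω * (Ypo 2 ω * ind (X ω = x ∧ S ω = 1)) =
          cexp p (Ypo 2) (fun ω => X ω = x ∧ S ω = 1) *
            prob p (fun ω => X ω = x ∧ S ω = 1) := by
        unfold cexp
        rw [div_mul_cancel₀]
        · rfl
        · exact ne_of_gt hpos
      rw [this, hPx1]
    · -- zero-probability case: both sides vanish
      have h0 : prob p (fun ω => X ω = x ∧ S ω = 1) = 0 :=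
        le_antisymm (not_lt.mp hpos) (prob_nonneg p hp0 _)
      have hz : ∀ ω, p ω * ind (X ω = x ∧ S ω = 1) = 0 := by
        intro ω
        by_cases hB : X ω = x ∧ S ω = 1
        · simp [ind, hB, prob_zero_p p hp0 h0 ω hB]
        · simp [ind, hB]
      have hzL : ∀ ω, p ω * (Ypo 2 ω * ind (X ω = x ∧ S ω = 1)) = 0 := by
        intro ω
        have := hz ω
        by_cases hB : X ω = x ∧ S ω = 1
        · simp [ind, hB] at this ⊢; tauto
        · simp [ind, hB]
      simp only [hzL, hz, Finset.sum_const_zero, mul_zero]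
  unfold gam cexp
  rw [hnum]
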